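/- Fix reals α > 2 and C > 0, let n ≥ 1 be an integer, and let k' be any positive integer upper bound on the maximum degree of an n-vertex α-proper power-law graph G (with constant C), e.g. k' = ⌈(C/(α−1) + 2)·n^(1/α) + i₁(n) + 3⌉. Then the number of edges of G is at most 1 + k'(k'+1)/4 + C·n·ζ(α−1), where ζ denotes the Riemann zeta function. -/

import Mathlib

/-- The degree of a vertex `v` in a simple graph on `Fin n`. -/
noncomputable def deg {n : ℕ} (G : SimpleGraph (Fin n)) (v : Fin n) : ℕ :=
  (G.neighborSet v).ncard

/-- The number of vertices of `G` of degree exactly `k`. -/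
noncomputable def Vcard {n : ℕ} (G : SimpleGraph (Fin n)) (k : ℕ) : ℕ :=
  {v : Fin n | deg G v = k}.ncard

/-- `i₁(n)`: the smallest positive integer `i` with `⌊C·n / i^α⌋ ≤ 1`. -/
noncomputable def i1 (α C : ℝ) (n : ℕ) : ℕ :=
  sInf {i : ℕ | 0 < i ∧ ⌊C * (n : ℝ) / (i : ℝ) ^ α⌋ ≤ 1}

/-- `G` is an `α`-proper power-law graph with constant `C`. -/
def IsProperPowerLaw (α C : ℝ) {n : ℕ} (G : SimpleGraph (Fin n)) : Prop :=
  (⌊C * (n : ℝ)⌋ - (i1 α C n : ℤ) - 1 ≤ (Vcard G 1 : ℤ) ∧ (Vcard G 1 : ℤ) ≤ ⌈C * (n : ℝ)⌉) ∧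
  (⌊C * (n : ℝ) / (2 : ℝ) ^ α⌋ ≤ (Vcard G 2 : ℤ) ∧
    (Vcard G 2 : ℤ) ≤ ⌈C * (n : ℝ) / (2 : ℝ) ^ α⌉ + 1) ∧
  (∀ i : ℕ, 3 ≤ i → i ≤ n →
    (Vcard G i : ℤ) = ⌊C * (n : ℝ) / (i : ℝ) ^ α⌋ ∨
    (Vcard G i : ℤ) = ⌈C * (n : ℝ) / (i : ℝ) ^ α⌉) ∧
  (∀ i : ℕ, 2 ≤ i → i ≤ n - 1 → Vcard G (i + 1) ≤ Vcard G i)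

/-- The Riemann zeta function on reals: `ζ(s) = ∑_{k ≥ 1} k^(−s)`. -/
noncomputable def zetaR (s : ℝ) : ℝ := ∑' k : ℕ, ((k : ℝ) + 1) ^ (-s)

lemma summable_aux {s : ℝ} (hs : 1 < s) : Summable (fun k : ℕ => ((k:ℝ)+1)^(-s)) := by
  have h1 : Summable (fun n : ℕ => 1 / (n:ℝ) ^ s) := Real.summable_one_div_nat_rpow.mpr hs
  have h2 := (summable_nat_add_iff 1).mpr h1
  refine h2.congr fun k => ?_
  push_cast
  rw [Real.rpow_neg (by positivity), one_div]

lemma zeta_nonneg (s : ℝ) : 0 ≤ zetaR s :=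
  tsum_nonneg fun k => Real.rpow_nonneg (by positivity) _

open Finset in
lemma partial_le_zeta {s : ℝ} (hs : 1 < s) (m : ℕ) :
    ∑ k ∈ range m, ((k:ℝ)+1)^(-s) ≤ zetaR s :=
  Summable.sum_le_tsum _ (fun i _ => Real.rpow_nonneg (by positivity) _) (summable_aux hs)

open Finset in
lemma gauss_real : ∀ m : ℕ, ∑ i ∈ range m, (i:ℝ) = m*(m-1)/2 := by
  intro m
  induction m with
  | zero => simp
  | succ k ih => rw [Finset.sum_range_succ, ih]; push_cast; ring

open Finset in
lemma handshake {n : ℕ} (G : SimpleGraph (Fin n)) (k' : ℕ) (hmax : ∀ v, deg G v ≤ k') :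
    ∑ k ∈ range (k'+1), k * Vcard G k = 2 * G.edgeSet.ncard := by
  classical
  have hdeg : ∀ v, deg G v = G.degree v := by
    intro v
    rw [deg, Set.ncard_eq_toFinset_card']
    simp [SimpleGraph.degree, SimpleGraph.neighborFinset]
  have hE : G.edgeSet.ncard = G.edgeFinset.card := by
    rw [← SimpleGraph.coe_edgeFinset, Set.ncard_coe_finset]
  have hV : ∀ k, Vcard G k = (univ.filter (fun v => deg G v = k)).card := by
    intro k
    rw [Vcard, Set.ncard_eq_toFinset_card']
    congr 1
    ext v
    simp
  have hsum : ∑ v : Fin n, deg G v = 2 * G.edgeFinset.card := by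
    rw [Finset.sum_congr rfl (fun v _ => hdeg v)]
    exact SimpleGraph.sum_degrees_eq_twice_card_edges G
  rw [hE, ← hsum]
  rw [← Finset.sum_fiberwise_of_maps_to (t := range (k'+1)) (g := deg G)
      (fun v _ => mem_range.mpr (Nat.lt_succ_of_le (hmax v))) (deg G)]
  refine Finset.sum_congr rfl fun k _ => ?_
  rw [hV, Finset.sum_congr rfl (fun v hv => (mem_filter.mp hv).2),
    Finset.sum_const, smul_eq_mul, mul_comm]

open Finset in
theorem stmt2 (α C : ℝ) (hα : 2 < α) (hC : 0 < C) (n : ℕ) (hn : 1 ≤ n)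
    (G : SimpleGraph (Fin n)) (hG : IsProperPowerLaw α C G)
    (k' : ℕ) (hk' : 0 < k') (hmax : ∀ v : Fin n, deg G v ≤ k') :
    (G.edgeSet.ncard : ℝ) ≤
      1 + (k' : ℝ) * ((k' : ℝ) + 1) / 4 + C * (n : ℝ) * zetaR (α - 1) := by
  have hs : (1:ℝ) < α - 1 := by linarith
  have hζ : 0 ≤ zetaR (α - 1) := zeta_nonneg _
  have hn0 : (0:ℝ) < n := by exact_mod_cast hn
  -- real form of handshake
  have hhs : ∑ k ∈ range (k'+1), (k:ℝ) * (Vcard G k : ℝ) = 2 * (G.edgeSet.ncard : ℝ) := by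
    have := handshake G k' hmax
    have := congrArg (fun m : ℕ => (m : ℝ)) this
    push_cast at this
    exact this
  -- per-term bound
  set g : ℕ → ℝ := fun k => C * n * (k:ℝ) ^ (-(α-1)) + k + (if k = 2 then 2 else 0) with hg
  have hbound : ∀ k ∈ range (k'+1), (k:ℝ) * (Vcard G k : ℝ) ≤ g k := by
    intro k _
    match k with
    | 0 =>
      have h00 : (0:ℝ) ^ (-(α-1)) = 0 :=
        Real.zero_rpow (by rw [neg_ne_zero]; intro h; rw [sub_eq_zero] at h; linarith)
      simp only [hg, Nat.cast_zero, zero_mul, h00, mul_zero, zero_add]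
      norm_num
    | 1 =>
      have h1 : (Vcard G 1 : ℝ) ≤ C * n + 1 := by
        have := hG.1.2
        have h2 : ((Vcard G 1 : ℤ) : ℝ) ≤ (⌈C * (n:ℝ)⌉ : ℝ) := by exact_mod_cast this
        have := Int.ceil_lt_add_one (C * (n:ℝ))
        push_cast at h2
        linarith
      simp only [hg, Nat.cast_one, Real.one_rpow]
      norm_num
      linarith
    | 2 =>
      have h2α : (0:ℝ) < (2:ℝ) ^ α := Real.rpow_pos_of_pos (by norm_num) _
      have h1 : (Vcard G 2 : ℝ) ≤ C * n / (2:ℝ)^α + 2 := by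
        have h2 : ((Vcard G 2 : ℤ) : ℝ) ≤ (⌈C * (n:ℝ) / (2:ℝ)^α⌉ : ℝ) + 1 := by
          exact_mod_cast hG.2.1.2
        have := Int.ceil_lt_add_one (C * (n:ℝ) / (2:ℝ)^α)
        push_cast at h2
        linarith
      have hpow : (2:ℝ) ^ (-(α-1)) = 2 / (2:ℝ)^α := by
        rw [show -(α-1) = 1 - α by ring, Real.rpow_sub (by norm_num), Real.rpow_one]
      simp only [hg, Nat.cast_ofNat, if_pos rfl, hpow]
      have : (2:ℝ) * (Vcard G 2 : ℝ) ≤ 2 * (C * n / (2:ℝ)^α + 2) := by linarith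
      calc (2:ℝ) * (Vcard G 2 : ℝ) ≤ 2 * (C * n / (2:ℝ)^α + 2) := this
        _ = C * n * (2 / (2:ℝ)^α) + 2 + 2 := by ring
    | (m+3) =>
      set k := m + 3 with hk
      have hk0 : (0:ℝ) < (k:ℝ) := by positivity
      have hkα : (0:ℝ) < (k:ℝ) ^ α := Real.rpow_pos_of_pos hk0 _
      have hpow : (k:ℝ) ^ (-(α-1)) = (k:ℝ) / (k:ℝ)^α := by
        rw [show -(α-1) = 1 - α by ring, Real.rpow_sub hk0, Real.rpow_one]
      have hite : (if k = 2 then (2:ℝ) else 0) = 0 := by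
        simp [hk]
      by_cases hkn : k ≤ n
      · have h1 : (Vcard G k : ℝ) ≤ C * n / (k:ℝ)^α + 1 := by
          rcases hG.2.2.1 k (by omega) hkn with h | h
          · have h2 : (Vcard G k : ℝ) = ((⌊C * (n:ℝ) / (k:ℝ)^α⌋ : ℤ) : ℝ) := by
              exact_mod_cast h
            have := Int.floor_le (C * (n:ℝ) / (k:ℝ)^α)
            linarith
          · have h2 : (Vcard G k : ℝ) = ((⌈C * (n:ℝ) / (k:ℝ)^α⌉ : ℤ) : ℝ) := by
              exact_mod_cast h
            have := Int.ceil_lt_add_one (C * (n:ℝ) / (k:ℝ)^α)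
            linarith
        simp only [hg, hite, hpow, add_zero]
        have h3 : (k:ℝ) * (Vcard G k : ℝ) ≤ (k:ℝ) * (C * n / (k:ℝ)^α + 1) := by
          apply mul_le_mul_of_nonneg_left h1 (le_of_lt hk0)
        calc (k:ℝ) * (Vcard G k : ℝ) ≤ (k:ℝ) * (C * n / (k:ℝ)^α + 1) := h3
          _ = C * n * ((k:ℝ) / (k:ℝ)^α) + k := by ring
      · have hV0 : Vcard G k = 0 := by
          rw [Vcard]
          convert Set.ncard_empty (Fin n)
          ext v
          simp only [Set.mem_setOf_eq, Set.mem_empty_iff_false, iff_false]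
          intro hdv
          have : deg G v ≤ n := by
            rw [deg]
            calc (G.neighborSet v).ncard ≤ (Set.univ : Set (Fin n)).ncard :=
                Set.ncard_le_ncard (Set.subset_univ _) (Set.toFinite _)
              _ = n := by rw [Set.ncard_univ]; simp
          omega
        rw [hV0]
        simp only [hg, hite, hpow, add_zero, Nat.cast_zero, mul_zero]
        positivity
  -- sum the bound
  have hsumg : ∑ k ∈ range (k'+1), g k ≤
      C * n * zetaR (α-1) + (k':ℝ) * ((k':ℝ)+1) / 2 + 2 := by
    simp only [hg]
    rw [Finset.sum_add_distrib, Finset.sum_add_distrib]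
    have hA : ∑ k ∈ range (k'+1), C * n * (k:ℝ) ^ (-(α-1)) ≤ C * n * zetaR (α-1) := by
      rw [← Finset.mul_sum]
      apply mul_le_mul_of_nonneg_left _ (by positivity)
      rw [Finset.sum_range_succ']
      have h00 : ((0:ℕ):ℝ) ^ (-(α-1)) = 0 := by
        rw [Nat.cast_zero]
        exact Real.zero_rpow (by rw [neg_ne_zero]; intro h; rw [sub_eq_zero] at h; linarith)
      rw [h00, add_zero]
      refine le_trans (le_of_eq (Finset.sum_congr rfl fun i _ => ?_)) (partial_le_zeta hs k')
      push_cast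
      ring_nf
    have hB : ∑ k ∈ range (k'+1), (k:ℝ) = (k':ℝ) * ((k':ℝ)+1) / 2 := by
      rw [gauss_real]
      push_cast
      ring
    have hCsum : ∑ k ∈ range (k'+1), (if k = 2 then (2:ℝ) else 0) ≤ 2 := by
      rw [Finset.sum_ite_eq' (range (k'+1)) 2 (fun _ => (2:ℝ))]
      split <;> norm_num
    linarith
  have htotal : 2 * (G.edgeSet.ncard : ℝ) ≤
      C * n * zetaR (α-1) + (k':ℝ) * ((k':ℝ)+1) / 2 + 2 := by
    rw [← hhs]
    exact le_trans (Finset.sum_le_sum hbound) hsumg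
  have hCnζ : 0 ≤ C * n * zetaR (α-1) := by positivity
  linarith
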